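/- arXiv:1811.06741 — 5 statements merged into one kernel-verified Lean document; each statement's English description precedes it below -/
import Mathlib

section
/- Consider the discrete-time NIMFA model v_i[k+1] = (1−δ_T)v_i[k] + β_T(1−v_i[k])Σⱼ a_{ij} v_j[k] with a steady state v∞ satisfying the fixed-point equation, viral states v_i[k] ∈ [0,1] for all i and k, and suppose δ_T + β_T d_i ≤ 1 for every node i, where d_i = Σⱼ a_{ij}. If v_i[0] ≤ v∞ᵢ for every node i, then v_i[k] ≤ v∞ᵢ for every node i and every time k ≥ 0. -/
open Finset

theorem nimfa_below_steady_state
    (N : ℕ) (a : Fin N → Fin N → ℝ) (ha : ∀ i j, a i j = 0 ∨ a i j = 1)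
    (βT δT : ℝ) (hβ : 0 < βT) (hδ : 0 ≤ δT)
    (vinf : Fin N → ℝ) (hvinf : ∀ i, 0 ≤ vinf i ∧ vinf i < 1)
    (hfix : ∀ i, vinf i = (1 - δT) * vinf i
      + βT * (1 - vinf i) * ∑ j, a i j * vinf j)
    (v : ℕ → Fin N → ℝ)
    (hv : ∀ k i, v (k + 1) i = (1 - δT) * v k i
      + βT * (1 - v k i) * ∑ j, a i j * v k j)
    (hbox : ∀ k i, v k i ∈ Set.Icc (0 : ℝ) 1)
    (hT : ∀ i, δT + βT * ∑ j, a i j ≤ 1)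
    (hinit : ∀ i, v 0 i ≤ vinf i) :
    ∀ k i, v k i ≤ vinf i := by
  intro k
  induction k with
  | zero => exact hinit
  | succ k ih =>
    intro i
    have haij : ∀ j, 0 ≤ a i j := fun j => by rcases ha i j with h | h <;> simp [h]
    have hS : ∑ j, a i j * v k j ≤ ∑ j, a i j * vinf j :=
      Finset.sum_le_sum fun j _ => mul_le_mul_of_nonneg_left (ih j) (haij j)
    have hSd : ∑ j, a i j * v k j ≤ ∑ j, a i j := by
      apply Finset.sum_le_sum
      intro j _
      nlinarith [(hbox k j).2, haij j]
    have h1 : 0 ≤ 1 - δT - βT * ∑ j, a i j * v k j := by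
      have := hT i
      nlinarith
    have hvinf1 : 0 < 1 - vinf i := by linarith [(hvinf i).2]
    have hfixi := hfix i
    have hvki := hv k i
    nlinarith [mul_nonneg h1 (sub_nonneg.mpr (ih i)),
      mul_nonneg (mul_nonneg hβ.le hvinf1.le) (sub_nonneg.mpr hS)]
end

section
/- Under the same hypotheses (δ_T + β_T d_i ≤ 1 for all i, v_i[k] ∈ [0,1] for all i and k, v∞ a fixed point of the NIMFA map with v∞ᵢ < 1), if v_i[0] ≥ v∞ᵢ for every node i, then v_i[k] ≥ v∞ᵢ for every node i and every time k ≥ 0. -/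
open Finset

theorem nimfa_above_steady_state
    (N : ℕ) (a : Fin N → Fin N → ℝ) (ha : ∀ i j, a i j = 0 ∨ a i j = 1)
    (βT δT : ℝ) (hβ : 0 < βT) (hδ : 0 ≤ δT)
    (vinf : Fin N → ℝ) (hvinf : ∀ i, 0 ≤ vinf i ∧ vinf i < 1)
    (hfix : ∀ i, vinf i = (1 - δT) * vinf i
      + βT * (1 - vinf i) * ∑ j, a i j * vinf j)
    (v : ℕ → Fin N → ℝ)
    (hv : ∀ k i, v (k + 1) i = (1 - δT) * v k i
      + βT * (1 - v k i) * ∑ j, a i j * v k j)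
    (hbox : ∀ k i, v k i ∈ Set.Icc (0 : ℝ) 1)
    (hT : ∀ i, δT + βT * ∑ j, a i j ≤ 1)
    (hinit : ∀ i, vinf i ≤ v 0 i) :
    ∀ k i, vinf i ≤ v k i := by
  intro k
  induction k with
  | zero => exact hinit
  | succ k ih =>
    intro i
    have ha0 : ∀ i j : Fin N, 0 ≤ a i j := by
      intro i j; rcases ha i j with h | h <;> simp [h]
    have key : v (k + 1) i - vinf i
        = (1 - δT - βT * ∑ j, a i j * vinf j) * (v k i - vinf i)
          + βT * (1 - v k i) * ∑ j, a i j * (v k j - vinf j) := by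
      have e := hfix i
      have hsum : ∑ j, a i j * (v k j - vinf j)
          = (∑ j, a i j * v k j) - ∑ j, a i j * vinf j := by
        rw [← Finset.sum_sub_distrib]; congr 1; ext j; ring
      rw [hv, hsum]
      linear_combination -e
    have hcoef : 0 ≤ 1 - δT - βT * ∑ j, a i j * vinf j := by
      have hle : (∑ j, a i j * vinf j) ≤ ∑ j, a i j := by
        apply Finset.sum_le_sum
        intro j _
        nlinarith [ha0 i j, (hvinf j).1, (hvinf j).2]
      nlinarith [hT i]
    have h1 : 0 ≤ v k i - vinf i := by linarith [ih i]
    have h2 : 0 ≤ 1 - v k i := by linarith [(hbox k i).2]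
    have h3 : 0 ≤ ∑ j, a i j * (v k j - vinf j) := by
      apply Finset.sum_nonneg
      intro j _
      exact mul_nonneg (ha0 i j) (by linarith [ih j])
    nlinarith [mul_nonneg hcoef h1, mul_nonneg (mul_nonneg hβ.le h2) h3]
end

section
/- Let the n×p measurement matrix X satisfy the restricted isometry property of order 2s with constant δ_{2s} < √2 − 1, and suppose the parameter vector α ∈ ℝ^p is s-sparse and y = Xα. Then the unique solution of the basis pursuit problem min ‖z‖₁ subject to y = Xz is z = α (exact recovery). -/
open Finset


lemma bp_supp_add {p : ℕ} (u v : Fin p → ℝ) :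
    (Finset.univ.filter (fun i => u i + v i ≠ 0)).card
      ≤ (Finset.univ.filter (fun i => u i ≠ 0)).card
        + (Finset.univ.filter (fun i => v i ≠ 0)).card := by
  refine le_trans (Finset.card_le_card ?_) (Finset.card_union_le _ _)
  intro i hi
  simp only [Finset.mem_filter, Finset.mem_union, Finset.mem_univ, true_and] at hi ⊢
  by_contra hc
  push_neg at hc
  simp [hc.1, hc.2] at hi

lemma bp_ro' {m p s : ℕ} (X : Matrix (Fin m) (Fin p) ℝ) {δ : ℝ}
    (hRIP : ∀ z : Fin p → ℝ,
      (Finset.univ.filter (fun i => z i ≠ 0)).card ≤ 2 * s →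
      (1 - δ) * ∑ i, z i ^ 2 ≤ ∑ i, (X.mulVec z i) ^ 2 ∧
        ∑ i, (X.mulVec z i) ^ 2 ≤ (1 + δ) * ∑ i, z i ^ 2)
    (u v : Fin p → ℝ) (hdisj : ∀ i, u i = 0 ∨ v i = 0)
    (hcard : (Finset.univ.filter (fun i => u i ≠ 0)).card
      + (Finset.univ.filter (fun i => v i ≠ 0)).card ≤ 2 * s) :
    |∑ i, X.mulVec u i * X.mulVec v i|
      ≤ δ * ((∑ i, u i ^ 2) + ∑ i, v i ^ 2) / 2 := by
  have hcv : (Finset.univ.filter (fun i => (-v) i ≠ 0)).card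
      = (Finset.univ.filter (fun i => v i ≠ 0)).card := by
    congr 1; ext i; simp
  have h1 : ∀ i, (u + v) i ^ 2 = u i ^ 2 + v i ^ 2 := by
    intro i; rcases hdisj i with h | h <;> simp [h] <;> ring
  have h2 : ∀ i, (u + (-v)) i ^ 2 = u i ^ 2 + v i ^ 2 := by
    intro i; rcases hdisj i with h | h <;> simp [h] <;> ring
  have e1 : ∑ i, (u + v) i ^ 2 = (∑ i, u i ^ 2) + ∑ i, v i ^ 2 := by
    rw [← Finset.sum_add_distrib]; exact Finset.sum_congr rfl fun i _ => h1 i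
  have e2 : ∑ i, (u + (-v)) i ^ 2 = (∑ i, u i ^ 2) + ∑ i, v i ^ 2 := by
    rw [← Finset.sum_add_distrib]; exact Finset.sum_congr rfl fun i _ => h2 i
  have f1 : ∑ i, (X.mulVec (u + v) i) ^ 2
      = (∑ i, (X.mulVec u i) ^ 2) + (∑ i, (X.mulVec v i) ^ 2)
        + 2 * ∑ i, X.mulVec u i * X.mulVec v i := by
    simp only [Matrix.mulVec_add, Pi.add_apply]
    rw [Finset.mul_sum, ← Finset.sum_add_distrib, ← Finset.sum_add_distrib]
    exact Finset.sum_congr rfl fun i _ => by ring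
  have f2 : ∑ i, (X.mulVec (u + (-v)) i) ^ 2
      = (∑ i, (X.mulVec u i) ^ 2) + (∑ i, (X.mulVec v i) ^ 2)
        - 2 * ∑ i, X.mulVec u i * X.mulVec v i := by
    simp only [Matrix.mulVec_add, Matrix.mulVec_neg, Pi.add_apply, Pi.neg_apply]
    rw [Finset.mul_sum, eq_sub_iff_add_eq, ← Finset.sum_add_distrib, ← Finset.sum_add_distrib]
    exact Finset.sum_congr rfl fun i _ => by ring
  have c1 : (Finset.univ.filter (fun i => (u + v) i ≠ 0)).card ≤ 2 * s :=
    le_trans (bp_supp_add u v) hcard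
  have c2 : (Finset.univ.filter (fun i => (u + (-v)) i ≠ 0)).card ≤ 2 * s := by
    refine le_trans (bp_supp_add u (-v)) ?_; rw [hcv]; exact hcard
  obtain ⟨l1, u1⟩ := hRIP _ c1
  obtain ⟨l2, u2⟩ := hRIP _ c2
  rw [e1] at l1 u1
  rw [e2] at l2 u2
  rw [f1] at l1 u1
  rw [f2] at l2 u2
  rw [abs_le]
  constructor <;> nlinarith [l1, u1, l2, u2]

lemma bp_ro {m p s : ℕ} (X : Matrix (Fin m) (Fin p) ℝ) {δ : ℝ} (hδ0 : 0 < δ)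
    (hRIP : ∀ z : Fin p → ℝ,
      (Finset.univ.filter (fun i => z i ≠ 0)).card ≤ 2 * s →
      (1 - δ) * ∑ i, z i ^ 2 ≤ ∑ i, (X.mulVec z i) ^ 2 ∧
        ∑ i, (X.mulVec z i) ^ 2 ≤ (1 + δ) * ∑ i, z i ^ 2)
    (u v : Fin p → ℝ) (hdisj : ∀ i, u i = 0 ∨ v i = 0)
    (hcard : (Finset.univ.filter (fun i => u i ≠ 0)).card
      + (Finset.univ.filter (fun i => v i ≠ 0)).card ≤ 2 * s) :
    |∑ i, X.mulVec u i * X.mulVec v i|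
      ≤ δ * (Real.sqrt (∑ i, u i ^ 2) * Real.sqrt (∑ i, v i ^ 2)) := by
  set a := Real.sqrt (∑ i, u i ^ 2) with ha
  set b := Real.sqrt (∑ i, v i ^ 2) with hb
  have hsu : ∀ i, 0 ≤ u i ^ 2 := fun i => sq_nonneg _
  have hsv : ∀ i, 0 ≤ v i ^ 2 := fun i => sq_nonneg _
  have hsumu : 0 ≤ ∑ i, u i ^ 2 := Finset.sum_nonneg fun i _ => hsu i
  have hsumv : 0 ≤ ∑ i, v i ^ 2 := Finset.sum_nonneg fun i _ => hsv i
  have ha2 : a ^ 2 = ∑ i, u i ^ 2 := Real.sq_sqrt hsumu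
  have hb2 : b ^ 2 = ∑ i, v i ^ 2 := Real.sq_sqrt hsumv
  by_cases hau : a = 0
  · have hu0 : ∀ i, u i = 0 := by
      intro i
      have : ∑ i, u i ^ 2 = 0 := by rw [← ha2, hau]; ring
      have := (Finset.sum_eq_zero_iff_of_nonneg (fun i _ => hsu i)).1 this i (Finset.mem_univ i)
      exact pow_eq_zero_iff (n := 2) (by norm_num) |>.1 this
    have : (fun i => u i) = (0 : Fin p → ℝ) := funext hu0
    have hXu : X.mulVec u = 0 := by
      have : u = (0 : Fin p → ℝ) := funext hu0
      rw [this, Matrix.mulVec_zero]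
    simp only [hXu, Pi.zero_apply, zero_mul, Finset.sum_const_zero, abs_zero]
    positivity
  by_cases hbv : b = 0
  · have hv0 : ∀ i, v i = 0 := by
      intro i
      have : ∑ i, v i ^ 2 = 0 := by rw [← hb2, hbv]; ring
      have := (Finset.sum_eq_zero_iff_of_nonneg (fun i _ => hsv i)).1 this i (Finset.mem_univ i)
      exact pow_eq_zero_iff (n := 2) (by norm_num) |>.1 this
    have hXv : X.mulVec v = 0 := by
      have : v = (0 : Fin p → ℝ) := funext hv0
      rw [this, Matrix.mulVec_zero]
    simp only [hXv, Pi.zero_apply, mul_zero, Finset.sum_const_zero, abs_zero]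
    positivity
  have hapos : 0 < a := lt_of_le_of_ne (Real.sqrt_nonneg _) (Ne.symm hau)
  have hbpos : 0 < b := lt_of_le_of_ne (Real.sqrt_nonneg _) (Ne.symm hbv)
  set u' : Fin p → ℝ := a⁻¹ • u with hu'
  set v' : Fin p → ℝ := b⁻¹ • v with hv'
  have hdisj' : ∀ i, u' i = 0 ∨ v' i = 0 := by
    intro i; rcases hdisj i with h | h
    · left; simp [hu', h]
    · right; simp [hv', h]
  have hcard' : (Finset.univ.filter (fun i => u' i ≠ 0)).card
      + (Finset.univ.filter (fun i => v' i ≠ 0)).card ≤ 2 * s := by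
    have e1 : (Finset.univ.filter (fun i => u' i ≠ 0)) = (Finset.univ.filter (fun i => u i ≠ 0)) := by
      ext i; simp [hu', Pi.smul_apply, smul_eq_mul, mul_eq_zero, hapos.ne', inv_eq_zero]
    have e2 : (Finset.univ.filter (fun i => v' i ≠ 0)) = (Finset.univ.filter (fun i => v i ≠ 0)) := by
      ext i; simp [hv', Pi.smul_apply, smul_eq_mul, mul_eq_zero, hbpos.ne', inv_eq_zero]
    rw [e1, e2]; exact hcard
  have hsum' : (∑ i, u' i ^ 2) = 1 := by
    simp only [hu', Pi.smul_apply, smul_eq_mul, mul_pow]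
    rw [← Finset.mul_sum, ← ha2]
    field_simp
  have hsumv' : (∑ i, v' i ^ 2) = 1 := by
    simp only [hv', Pi.smul_apply, smul_eq_mul, mul_pow]
    rw [← Finset.mul_sum, ← hb2]
    field_simp
  have hip : ∑ i, X.mulVec u' i * X.mulVec v' i
      = a⁻¹ * b⁻¹ * ∑ i, X.mulVec u i * X.mulVec v i := by
    simp only [hu', hv', Matrix.mulVec_smul, Pi.smul_apply, smul_eq_mul]
    rw [Finset.mul_sum]
    exact Finset.sum_congr rfl fun i _ => by ring
  have := bp_ro' (s := s) X hRIP u' v' hdisj' hcard'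
  rw [hip, hsum', hsumv'] at this
  have h2 : |a⁻¹ * b⁻¹ * ∑ i, X.mulVec u i * X.mulVec v i| ≤ δ := by
    calc |a⁻¹ * b⁻¹ * ∑ i, X.mulVec u i * X.mulVec v i| ≤ δ * (1 + 1) / 2 := this
    _ = δ := by ring
  rw [abs_mul, abs_of_pos (by positivity : (0:ℝ) < a⁻¹ * b⁻¹)] at h2
  calc |∑ i, X.mulVec u i * X.mulVec v i|
      = a * b * (a⁻¹ * b⁻¹ * |∑ i, X.mulVec u i * X.mulVec v i|) := by
        field_simp
    _ ≤ a * b * δ := by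
        apply mul_le_mul_of_nonneg_left h2 (by positivity)
    _ = δ * (a * b) := by ring


-- generic chunk-sum lemma
lemma bp_sum_blocks {α : Type*} (s : ℕ) (f : α → ℝ) :
    ∀ (N : ℕ) (l : List α), l.length ≤ s * N →
      ∑ j ∈ Finset.range N, (((l.drop (s*j)).take s).map f).sum = (l.map f).sum := by
  intro N
  induction N with
  | zero =>
    intro l hl
    simp only [Nat.mul_zero, Nat.le_zero, List.length_eq_zero_iff] at hl
    subst hl; simp
  | succ N ih =>
    intro l hl
    rw [Finset.sum_range_succ']
    have h0 : ((l.drop (s*0)).take s).map f = (l.take s).map f := by simp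
    have hstep : ∀ j, (l.drop (s*(j+1))).take s = ((l.drop s).drop (s*j)).take s := by
      intro j
      rw [List.drop_drop]
      congr 1
      ring
    have hlen : (l.drop s).length ≤ s * N := by
      rw [List.length_drop]
      have : s * (N+1) = s * N + s := by ring
      omega
    calc (∑ j ∈ Finset.range N, (((l.drop (s*(j+1))).take s).map f).sum)
          + (((l.drop (s*0)).take s).map f).sum
        = (∑ j ∈ Finset.range N, ((((l.drop s).drop (s*j)).take s).map f).sum)
          + ((l.take s).map f).sum := by
          rw [h0]; congr 1; exact Finset.sum_congr rfl fun j _ => by rw [hstep]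
      _ = ((l.drop s).map f).sum + ((l.take s).map f).sum := by rw [ih _ hlen]
      _ = (l.map f).sum := by
          conv_rhs => rw [← List.take_append_drop s l]
          rw [List.map_append, List.sum_append]; ring

-- membership characterization of blocks
lemma bp_mem_block {α : Type*} {s j : ℕ} {l : List α} {x : α} :
    x ∈ (l.drop (s*j)).take s ↔
      ∃ (k : ℕ) (hk : k < l.length), l[k] = x ∧ s*j ≤ k ∧ k < s*j + s := by
  constructor
  · intro hx
    obtain ⟨i, hi, hget⟩ := List.mem_iff_getElem.1 hx
    have hi' : i < s := lt_of_lt_of_le hi (by simpa using List.length_take_le s _)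
    have hlen : s*j + i < l.length := by
      have := hi
      simp only [List.length_take, List.length_drop, lt_min_iff] at this
      omega
    refine ⟨s*j + i, hlen, ?_, by omega, by omega⟩
    rw [← hget, List.getElem_take, List.getElem_drop]
  · rintro ⟨k, hk, hget, hk1, hk2⟩
    have hlt : k - s*j < ((l.drop (s*j)).take s).length := by
      simp only [List.length_take, List.length_drop, lt_min_iff]
      omega
    refine List.mem_iff_getElem.2 ⟨k - s*j, hlt, ?_⟩
    rw [List.getElem_take, List.getElem_drop, ← hget]
    congr 1
    omega

lemma bp_block_disj {α : Type*} {s : ℕ} (hs : 0 < s) {l : List α} (hnd : l.Nodup)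
    {j j' : ℕ} {x : α} (hx : x ∈ (l.drop (s*j)).take s) (hx' : x ∈ (l.drop (s*j')).take s) :
    j = j' := by
  obtain ⟨k, hk, hget, hk1, hk2⟩ := bp_mem_block.1 hx
  obtain ⟨k', hk', hget', hk1', hk2'⟩ := bp_mem_block.1 hx'
  have hkk : k = k' := (hnd.getElem_inj_iff).1 (by rw [hget, hget'])
  have e1 : k / s = j := Nat.div_eq_of_lt_le (by rw [mul_comm]; exact hk1)
    (by rw [Nat.succ_mul, mul_comm j s]; exact hk2)
  have e2 : k' / s = j' := Nat.div_eq_of_lt_le (by rw [mul_comm]; exact hk1')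
    (by rw [Nat.succ_mul, mul_comm j' s]; exact hk2')
  rw [← e1, ← e2, hkk]

lemma bp_block_le {p : ℕ} {s : ℕ} (h : Fin p → ℝ) {l : List (Fin p)}
    (hsort : ∀ (i j : ℕ) (hi : i < l.length) (hj : j < l.length), i ≤ j → |h l[j]| ≤ |h l[i]|)
    {j : ℕ} {x y : Fin p} (hx : x ∈ (l.drop (s*(j+1))).take s)
    (hy : y ∈ (l.drop (s*j)).take s) : |h x| ≤ |h y| := by
  obtain ⟨k, hk, hget, hk1, hk2⟩ := bp_mem_block.1 hx
  obtain ⟨k', hk', hget', hk1', hk2'⟩ := bp_mem_block.1 hy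
  have hle : k' ≤ k := by
    have : s * (j+1) = s * j + s := by ring
    omega
  have := hsort k' k hk' hk hle
  rw [hget, hget'] at this
  exact this

lemma bp_block_l2 {p s : ℕ} (hs : 0 < s) (h : Fin p → ℝ) {l : List (Fin p)}
    (hnd : l.Nodup)
    (hsort : ∀ (i j : ℕ) (hi : i < l.length) (hj : j < l.length), i ≤ j → |h l[j]| ≤ |h l[i]|)
    (j : ℕ) :
    Real.sqrt (∑ i ∈ ((l.drop (s*(j+1))).take s).toFinset, h i ^ 2)
      ≤ (Real.sqrt s)⁻¹ * ∑ i ∈ ((l.drop (s*j)).take s).toFinset, |h i| := by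
  classical
  set b1 : List (Fin p) := (l.drop (s*(j+1))).take s with hb1
  set b0 : List (Fin p) := (l.drop (s*j)).take s with hb0
  set L : ℝ := ∑ i ∈ b0.toFinset, |h i| with hL
  have hLnn : 0 ≤ L := Finset.sum_nonneg fun i _ => abs_nonneg _
  have hspos : (0:ℝ) < (s:ℝ) := by exact_mod_cast hs
  have hsqrts : 0 < Real.sqrt s := Real.sqrt_pos.2 hspos
  by_cases hB1 : b1.toFinset = ∅
  · rw [hB1]
    simp only [Finset.sum_empty, Real.sqrt_zero]
    positivity
  -- b1 nonempty, so l.length > s*(j+1), so b0 has length s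
  have hb1ne : b1 ≠ [] := by
    intro hnil; rw [hnil] at hB1; simp at hB1
  have hlen1 : 0 < b1.length := List.length_pos_iff.2 hb1ne
  have hlgt : s * (j+1) < l.length := by
    have : b1.length = min s (l.length - s*(j+1)) := by
      rw [hb1, List.length_take, List.length_drop]
    omega
  have hb0len : b0.length = s := by
    rw [hb0, List.length_take, List.length_drop]
    have : s * (j+1) = s * j + s := by ring
    omega
  have hb0nd : b0.Nodup := ((List.take_sublist _ _).trans (List.drop_sublist _ _)).nodup hnd
  have hb1nd : b1.Nodup := ((List.take_sublist _ _).trans (List.drop_sublist _ _)).nodup hnd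
  have hb0card : b0.toFinset.card = s := by
    rw [List.toFinset_card_of_nodup hb0nd, hb0len]
  have hb1card : b1.toFinset.card ≤ s := by
    refine le_trans (List.toFinset_card_le _) ?_
    rw [hb1, List.length_take]; exact min_le_left _ _
  have hbound : ∀ x ∈ b1.toFinset, (s:ℝ) * |h x| ≤ L := by
    intro x hx
    rw [List.mem_toFinset] at hx
    have : (s:ℝ) * |h x| = ∑ _y ∈ b0.toFinset, |h x| := by
      rw [Finset.sum_const, hb0card, nsmul_eq_mul]
    rw [this, hL]
    refine Finset.sum_le_sum fun y hy => ?_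
    rw [List.mem_toFinset] at hy
    exact bp_block_le h hsort hx hy
  have hxb : ∀ x ∈ b1.toFinset, |h x| ≤ L / s :=
    fun x hx => (le_div_iff₀' hspos).2 (hbound x hx)
  have hsum1 : ∑ i ∈ b1.toFinset, |h i| ≤ L := by
    calc ∑ i ∈ b1.toFinset, |h i| ≤ ∑ _i ∈ b1.toFinset, L / s :=
          Finset.sum_le_sum hxb
      _ = b1.toFinset.card * (L / s) := by rw [Finset.sum_const, nsmul_eq_mul]
      _ ≤ s * (L / s) := by
          apply mul_le_mul_of_nonneg_right _ (by positivity)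
          exact_mod_cast hb1card
      _ = L := by field_simp
  have hsq : ∑ i ∈ b1.toFinset, h i ^ 2 ≤ L^2 / s := by
    calc ∑ i ∈ b1.toFinset, h i ^ 2 = ∑ i ∈ b1.toFinset, |h i| * |h i| := by
          refine Finset.sum_congr rfl fun i _ => ?_
          rw [← sq_abs, sq]
      _ ≤ ∑ i ∈ b1.toFinset, |h i| * (L / s) := by
          refine Finset.sum_le_sum fun i hi => ?_
          exact mul_le_mul_of_nonneg_left (hxb i hi) (abs_nonneg _)
      _ = (∑ i ∈ b1.toFinset, |h i|) * (L / s) := by rw [← Finset.sum_mul]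
      _ ≤ L * (L / s) := mul_le_mul_of_nonneg_right hsum1 (by positivity)
      _ = L^2 / s := by ring
  calc Real.sqrt (∑ i ∈ b1.toFinset, h i ^ 2) ≤ Real.sqrt (L^2 / s) :=
        Real.sqrt_le_sqrt hsq
    _ = (Real.sqrt s)⁻¹ * L := by
        rw [Real.sqrt_div (sq_nonneg L), Real.sqrt_sq hLnn, div_eq_inv_mul]


def bpRes {p : ℕ} (h : Fin p → ℝ) (S : Finset (Fin p)) : Fin p → ℝ :=
  fun i => if i ∈ S then h i else 0

lemma bpRes_supp_card {p : ℕ} (h : Fin p → ℝ) (S : Finset (Fin p)) :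
    (Finset.univ.filter (fun i => bpRes h S i ≠ 0)).card ≤ S.card := by
  apply Finset.card_le_card
  intro i hi
  simp only [Finset.mem_filter, bpRes] at hi
  by_contra hc
  simp [hc] at hi

lemma bpRes_sq_sum {p : ℕ} (h : Fin p → ℝ) (S : Finset (Fin p)) :
    ∑ i, bpRes h S i ^ 2 = ∑ i ∈ S, h i ^ 2 := by
  calc ∑ i, bpRes h S i ^ 2 = ∑ i, (if i ∈ S then h i ^ 2 else 0) := by
        refine Finset.sum_congr rfl fun i _ => ?_
        by_cases hi : i ∈ S <;> simp [bpRes, hi]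
    _ = ∑ i ∈ Finset.univ ∩ S, h i ^ 2 := Finset.sum_ite_mem _ _ _
    _ = ∑ i ∈ S, h i ^ 2 := by rw [Finset.univ_inter]

lemma bpRes_union {p : ℕ} (h : Fin p → ℝ) {S T : Finset (Fin p)} (hd : Disjoint S T) :
    bpRes h (S ∪ T) = bpRes h S + bpRes h T := by
  funext i
  by_cases hS : i ∈ S <;> by_cases hT : i ∈ T
  · exact absurd hT (Finset.disjoint_left.1 hd hS)
  all_goals simp [bpRes, hS, hT]

theorem basis_pursuit_exact_recovery
    (m p s : ℕ) (X : Matrix (Fin m) (Fin p) ℝ)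
    (δ : ℝ) (hδ0 : 0 < δ) (hδ : δ < Real.sqrt 2 - 1)
    (hRIP : ∀ z : Fin p → ℝ,
      (Finset.univ.filter (fun i => z i ≠ 0)).card ≤ 2 * s →
      (1 - δ) * ∑ i, z i ^ 2 ≤ ∑ i, (X.mulVec z i) ^ 2 ∧
        ∑ i, (X.mulVec z i) ^ 2 ≤ (1 + δ) * ∑ i, z i ^ 2)
    (α : Fin p → ℝ)
    (hα : (Finset.univ.filter (fun i => α i ≠ 0)).card ≤ s)
    (y : Fin m → ℝ) (hy : y = X.mulVec α) :
    ∀ z : Fin p → ℝ, X.mulVec z = y →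
      (∑ i, |z i|) ≤ (∑ i, |α i|) → z = α := by
  classical
  intro z hz hz1
  -- trivial case s = 0
  rcases Nat.eq_zero_or_pos s with hs0 | hs
  · subst hs0
    have hα0 : α = 0 := by
      funext i
      show α i = 0
      by_contra hne
      have hmem : i ∈ Finset.univ.filter (fun i => α i ≠ 0) := by
        simp [hne]
      have := Finset.card_pos.2 ⟨i, hmem⟩
      omega
    subst hα0
    have h0 : ∑ i, |z i| ≤ 0 := by simpa using hz1
    have hz0 : ∑ i, |z i| = 0 :=
      le_antisymm h0 (Finset.sum_nonneg fun i _ => abs_nonneg _)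
    funext i
    have := (Finset.sum_eq_zero_iff_of_nonneg (fun i _ => abs_nonneg (z i))).1 hz0 i
      (Finset.mem_univ i)
    simpa using abs_eq_zero.1 this
  -- main case
  set h : Fin p → ℝ := z - α with hh
  clear_value h
  suffices hzero : ∀ i, h i = 0 by
    funext i
    have := hzero i
    simp only [hh, Pi.sub_apply, sub_eq_zero] at this
    exact this
  have hXh : X.mulVec h = 0 := by
    rw [hh, Matrix.mulVec_sub, hz, hy, sub_self]
  set T0 : Finset (Fin p) := Finset.univ.filter (fun i => α i ≠ 0) with hT0
  clear_value T0
  have hα_off : ∀ i, i ∉ T0 → α i = 0 := by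
    intro i hi
    by_contra hne
    exact hi (by simp [hT0, hne])
  -- cone constraint
  have cone : ∑ i ∈ T0ᶜ, |h i| ≤ ∑ i ∈ T0, |h i| := by
    have hzon : ∀ i ∈ T0ᶜ, |z i| = |h i| := by
      intro i hi
      rw [hh]
      simp only [Pi.sub_apply]
      rw [hα_off i (Finset.mem_compl.1 hi), sub_zero]
    have htr : ∀ i ∈ T0, |α i| ≤ |z i| + |h i| := by
      intro i _
      have heq : α i = z i - h i := by rw [hh]; simp
      calc |α i| = |z i - h i| := by rw [heq]
        _ ≤ |z i| + |h i| := abs_sub _ _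
    have e1 : ∑ i, |z i| = ∑ i ∈ T0, |z i| + ∑ i ∈ T0ᶜ, |z i| :=
      (Finset.sum_add_sum_compl T0 _).symm
    have e2 : ∑ i, |α i| = ∑ i ∈ T0, |α i| + ∑ i ∈ T0ᶜ, |α i| :=
      (Finset.sum_add_sum_compl T0 _).symm
    have e3 : ∑ i ∈ T0ᶜ, |α i| = 0 :=
      Finset.sum_eq_zero fun i hi => by rw [hα_off i (Finset.mem_compl.1 hi), abs_zero]
    have e4 : ∑ i ∈ T0ᶜ, |z i| = ∑ i ∈ T0ᶜ, |h i| := Finset.sum_congr rfl hzon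
    have e5 : ∑ i ∈ T0, |α i| ≤ ∑ i ∈ T0, |z i| + ∑ i ∈ T0, |h i| := by
      rw [← Finset.sum_add_distrib]
      exact Finset.sum_le_sum htr
    linarith
  -- sorted list of T0ᶜ
  set ble : Fin p → Fin p → Bool := fun a b => decide (|h b| ≤ |h a|) with hble
  set l : List (Fin p) := T0ᶜ.toList.mergeSort ble with hl
  clear_value l
  have hperm : l.Perm T0ᶜ.toList := by
    rw [hl]
    exact List.mergeSort_perm _ _
  have hlnd : l.Nodup := (hperm.nodup_iff).2 (Finset.nodup_toList _)
  have hltoF : l.toFinset = T0ᶜ := by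
    rw [List.toFinset_eq_of_perm _ _ hperm, Finset.toList_toFinset]
  have hmeml : ∀ x, x ∈ l ↔ x ∈ T0ᶜ := by
    intro x
    rw [← hltoF, List.mem_toFinset]
  have hsort : ∀ (i j : ℕ) (hi : i < l.length) (hj : j < l.length),
      i ≤ j → |h l[j]| ≤ |h l[i]| := by
    have hp : List.Pairwise (fun a b => ble a b = true) l := by
      rw [hl]
      refine List.pairwise_mergeSort ?_ ?_ _
      · intro a b c h1 h2
        simp only [hble, decide_eq_true_eq] at h1 h2 ⊢
        exact le_trans h2 h1
      · intro a b
        simp only [hble, Bool.or_eq_true, decide_eq_true_eq]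
        exact le_total _ _
    intro i j hi hj hij
    rcases eq_or_lt_of_le hij with rfl | hlt
    · exact le_refl _
    have := List.pairwise_iff_getElem.1 hp i j hi hj hlt
    simpa only [hble, decide_eq_true_eq] using this
  set S : ℕ → Finset (Fin p) := fun j => ((l.drop (s*j)).take s).toFinset with hS
  clear_value S
  have hSsub : ∀ j, S j ⊆ T0ᶜ := by
    intro j x hx
    rw [hS, List.mem_toFinset] at hx
    exact (hmeml x).1 (((List.take_sublist _ _).trans (List.drop_sublist _ _)).mem hx)
  have hScard : ∀ j, (S j).card ≤ s := by
    intro j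
    rw [hS]
    refine le_trans (List.toFinset_card_le _) ?_
    rw [List.length_take]
    exact min_le_left _ _
  have hSdisj : ∀ {j j' : ℕ} {i : Fin p}, i ∈ S j → i ∈ S j' → j = j' := by
    intro j j' i hij hij'
    rw [hS, List.mem_toFinset] at hij hij'
    exact bp_block_disj hs hlnd hij hij'
  -- partition of h
  have hpart : (bpRes h T0) + ∑ j ∈ Finset.range l.length, bpRes h (S j) = h := by
    funext i
    simp only [Pi.add_apply, Finset.sum_apply]
    by_cases hi : i ∈ T0
    · have h1 : bpRes h T0 i = h i := by simp [bpRes, hi]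
      have h2 : ∀ j ∈ Finset.range l.length, bpRes h (S j) i = 0 := by
        intro j _
        have hnot : i ∉ S j := fun hmem => (Finset.mem_compl.1 (hSsub j hmem)) hi
        simp [bpRes, hnot]
      rw [h1, Finset.sum_eq_zero h2, add_zero]
    · have h1 : bpRes h T0 i = 0 := by simp [bpRes, hi]
      have himem : i ∈ l := (hmeml i).2 (Finset.mem_compl.2 hi)
      obtain ⟨k, hk, hget⟩ := List.mem_iff_getElem.1 himem
      have hj0mem : i ∈ S (k / s) := by
        simp only [hS, List.mem_toFinset]
        refine bp_mem_block.2 ⟨k, hk, hget, ?_, ?_⟩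
        · rw [mul_comm]
          exact Nat.div_mul_le_self k s
        · have hdm := Nat.div_add_mod k s
          have hml := Nat.mod_lt k hs
          omega
      have hj0lt : k / s < l.length := lt_of_le_of_lt (Nat.div_le_self k s) hk
      rw [h1, zero_add]
      rw [Finset.sum_eq_single_of_mem (k / s) (Finset.mem_range.2 hj0lt)
        (fun j _ hne => by
          have hnot : i ∉ S j := fun hmem => hne (hSdisj hmem hj0mem)
          simp [bpRes, hnot])]
      simp [bpRes, hj0mem]
  have hT0S0 : Disjoint T0 (S 0) := by
    rw [Finset.disjoint_right]
    intro i hi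
    have := hSsub 0 hi
    simp only [Finset.mem_compl] at this
    exact this
  have hpart2 : bpRes h (T0 ∪ S 0) + ∑ j ∈ Finset.Ico 1 l.length, bpRes h (S j) = h := by
    have hsplit : ∑ j ∈ Finset.range l.length, bpRes h (S j)
        = bpRes h (S 0) + ∑ j ∈ Finset.Ico 1 l.length, bpRes h (S j) := by
      rcases Nat.eq_zero_or_pos l.length with hN0 | hNpos
      · have hlnil : l = [] := List.length_eq_zero_iff.1 hN0
        have hS0 : bpRes h (S 0) = 0 := by
          funext i
          simp [bpRes, hS, hlnil]
        rw [hN0, hS0]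
        simp
      · rw [Finset.range_eq_Ico, Finset.sum_eq_sum_Ico_succ_bot hNpos]
    rw [bpRes_union h hT0S0, add_assoc, ← hsplit, hpart]
  -- notation
  set a : ℝ := Real.sqrt (∑ i, bpRes h T0 i ^ 2) with ha
  set b : ℝ := Real.sqrt (∑ i, bpRes h (S 0) i ^ 2) with hb
  set A : ℝ := ∑ i, bpRes h (T0 ∪ S 0) i ^ 2 with hA
  clear_value a b A
  have hAnn : 0 ≤ A := by
    rw [hA]; exact Finset.sum_nonneg fun i _ => sq_nonneg _
  have hann : 0 ≤ a := by rw [ha]; exact Real.sqrt_nonneg _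
  have hbnn : 0 ≤ b := by rw [hb]; exact Real.sqrt_nonneg _
  have ha2 : a ^ 2 = ∑ i, bpRes h T0 i ^ 2 := by
    rw [ha]; exact Real.sq_sqrt (Finset.sum_nonneg fun i _ => sq_nonneg _)
  have hb2 : b ^ 2 = ∑ i, bpRes h (S 0) i ^ 2 := by
    rw [hb]; exact Real.sq_sqrt (Finset.sum_nonneg fun i _ => sq_nonneg _)
  have hAab : A = a ^ 2 + b ^ 2 := by
    rw [hA, ha2, hb2, bpRes_sq_sum, bpRes_sq_sum, bpRes_sq_sum, Finset.sum_union hT0S0]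
  set g : Fin m → ℝ := X.mulVec (bpRes h (T0 ∪ S 0)) with hg
  clear_value g
  have hgsum : g = - ∑ j ∈ Finset.Ico 1 l.length, X.mulVec (bpRes h (S j)) := by
    have h0 : X.mulVec (bpRes h (T0 ∪ S 0))
        + ∑ j ∈ Finset.Ico 1 l.length, X.mulVec (bpRes h (S j)) = 0 := by
      calc X.mulVec (bpRes h (T0 ∪ S 0))
            + ∑ j ∈ Finset.Ico 1 l.length, X.mulVec (bpRes h (S j))
          = X.mulVec (bpRes h (T0 ∪ S 0)
              + ∑ j ∈ Finset.Ico 1 l.length, bpRes h (S j)) := by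
            rw [Matrix.mulVec_add]
            congr 1
            simp only [← Matrix.mulVecLin_apply]
            exact (map_sum _ _ _).symm
        _ = X.mulVec h := by rw [hpart2]
        _ = 0 := hXh
    rw [hg, eq_neg_iff_add_eq_zero]
    exact h0
  -- RIP lower bound
  have hRIPlow : (1 - δ) * A ≤ ∑ i, g i ^ 2 := by
    have hcard : (Finset.univ.filter (fun i => bpRes h (T0 ∪ S 0) i ≠ 0)).card ≤ 2 * s := by
      refine le_trans (bpRes_supp_card h _) ?_
      refine le_trans (Finset.card_union_le _ _) ?_
      have h1 := hScard 0
      omega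
    simp only [hA, hg]
    exact (hRIP _ hcard).1
  set c : ℕ → ℝ := fun j => Real.sqrt (∑ i, bpRes h (S j) i ^ 2) with hc
  have hcnn : ∀ j, 0 ≤ c j := by
    intro j; rw [hc]; exact Real.sqrt_nonneg _
  set C : ℝ := ∑ j ∈ Finset.Ico 1 l.length, c j with hC
  clear_value c C
  have hCnn : 0 ≤ C := by
    rw [hC]; exact Finset.sum_nonneg fun j _ => hcnn j
  -- upper bound on ‖g‖²
  have hupper : ∑ i, g i ^ 2 ≤ δ * ((a + b) * C) := by
    have hgpt : ∀ i, g i = - ∑ j ∈ Finset.Ico 1 l.length, X.mulVec (bpRes h (S j)) i := by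
      intro i
      have := congrFun hgsum i
      simpa using this
    have e1 : ∑ i, g i ^ 2
        = ∑ j ∈ Finset.Ico 1 l.length, (- ∑ i, g i * X.mulVec (bpRes h (S j)) i) := by
      calc ∑ i, g i ^ 2 = ∑ i, g i * g i := by
            refine Finset.sum_congr rfl fun i _ => ?_
            ring
        _ = ∑ i, g i * (- ∑ j ∈ Finset.Ico 1 l.length, X.mulVec (bpRes h (S j)) i) := by
            refine Finset.sum_congr rfl fun i _ => ?_
            rw [← hgpt i]
        _ = ∑ i, ∑ j ∈ Finset.Ico 1 l.length, (-(g i * X.mulVec (bpRes h (S j)) i)) := by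
            refine Finset.sum_congr rfl fun i _ => ?_
            rw [mul_neg, Finset.mul_sum, ← Finset.sum_neg_distrib]
        _ = ∑ j ∈ Finset.Ico 1 l.length, ∑ i, (-(g i * X.mulVec (bpRes h (S j)) i)) :=
            Finset.sum_comm
        _ = ∑ j ∈ Finset.Ico 1 l.length, (- ∑ i, g i * X.mulVec (bpRes h (S j)) i) := by
            refine Finset.sum_congr rfl fun j _ => ?_
            rw [Finset.sum_neg_distrib]
    have hbound : ∀ j ∈ Finset.Ico 1 l.length,
        - ∑ i, g i * X.mulVec (bpRes h (S j)) i ≤ δ * ((a + b) * c j) := by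
      intro j hj
      have hj1 : 1 ≤ j := (Finset.mem_Ico.1 hj).1
      have hgsplit : ∀ i, g i = X.mulVec (bpRes h T0) i + X.mulVec (bpRes h (S 0)) i := by
        intro i
        rw [hg, bpRes_union h hT0S0, Matrix.mulVec_add]
        simp
      have hsum_split : ∑ i, g i * X.mulVec (bpRes h (S j)) i
          = (∑ i, X.mulVec (bpRes h T0) i * X.mulVec (bpRes h (S j)) i)
            + ∑ i, X.mulVec (bpRes h (S 0)) i * X.mulVec (bpRes h (S j)) i := by
        rw [← Finset.sum_add_distrib]
        refine Finset.sum_congr rfl fun i _ => ?_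
        rw [hgsplit i]
        ring
      have hd1 : ∀ i, bpRes h T0 i = 0 ∨ bpRes h (S j) i = 0 := by
        intro i
        by_cases hi : i ∈ T0
        · right
          have hnot : i ∉ S j := fun hm => (Finset.mem_compl.1 (hSsub j hm)) hi
          simp [bpRes, hnot]
        · left
          simp [bpRes, hi]
      have hd2 : ∀ i, bpRes h (S 0) i = 0 ∨ bpRes h (S j) i = 0 := by
        intro i
        by_cases hi : i ∈ S 0
        · right
          have hnot : i ∉ S j := fun hm => by
            have := hSdisj hi hm
            omega
          simp [bpRes, hnot]
        · left
          simp [bpRes, hi]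
      have hc1 : (Finset.univ.filter (fun i => bpRes h T0 i ≠ 0)).card
          + (Finset.univ.filter (fun i => bpRes h (S j) i ≠ 0)).card ≤ 2 * s := by
        have := bpRes_supp_card h T0
        have := bpRes_supp_card h (S j)
        have := hScard j
        omega
      have hc2 : (Finset.univ.filter (fun i => bpRes h (S 0) i ≠ 0)).card
          + (Finset.univ.filter (fun i => bpRes h (S j) i ≠ 0)).card ≤ 2 * s := by
        have := bpRes_supp_card h (S 0)
        have := bpRes_supp_card h (S j)
        have := hScard 0
        have := hScard j
        omega
      have hro1 := bp_ro (s := s) X hδ0 hRIP _ _ hd1 hc1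
      have hro2 := bp_ro (s := s) X hδ0 hRIP _ _ hd2 hc2
      have hro1' : |∑ i, X.mulVec (bpRes h T0) i * X.mulVec (bpRes h (S j)) i|
          ≤ δ * (a * c j) := by
        simp only [ha, hc]
        exact hro1
      have hro2' : |∑ i, X.mulVec (bpRes h (S 0)) i * X.mulVec (bpRes h (S j)) i|
          ≤ δ * (b * c j) := by
        simp only [hb, hc]
        exact hro2
      rw [hsum_split, neg_add]
      calc (- ∑ i, X.mulVec (bpRes h T0) i * X.mulVec (bpRes h (S j)) i)
            + (- ∑ i, X.mulVec (bpRes h (S 0)) i * X.mulVec (bpRes h (S j)) i)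
          ≤ |∑ i, X.mulVec (bpRes h T0) i * X.mulVec (bpRes h (S j)) i|
            + |∑ i, X.mulVec (bpRes h (S 0)) i * X.mulVec (bpRes h (S j)) i| :=
            add_le_add (neg_le_abs _) (neg_le_abs _)
        _ ≤ δ * (a * c j) + δ * (b * c j) := add_le_add hro1' hro2'
        _ = δ * ((a + b) * c j) := by ring
    calc ∑ i, g i ^ 2
        = ∑ j ∈ Finset.Ico 1 l.length, (- ∑ i, g i * X.mulVec (bpRes h (S j)) i) := e1
      _ ≤ ∑ j ∈ Finset.Ico 1 l.length, δ * ((a + b) * c j) := Finset.sum_le_sum hbound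
      _ = δ * ((a + b) * C) := by
          rw [hC]
          simp only [← Finset.mul_sum]
  -- tail bound
  have htail : C ≤ a := by
    set L1 : ℕ → ℝ := fun j => ∑ i ∈ S j, |h i| with hL1
    clear_value L1
    have hblock : ∀ j : ℕ, c (j+1) ≤ (Real.sqrt s)⁻¹ * L1 j := by
      intro j
      have hbl := bp_block_l2 hs h hlnd hsort j
      have e : c (j+1) = Real.sqrt (∑ i ∈ ((l.drop (s*(j+1))).take s).toFinset, h i ^ 2) := by
        simp only [hc]
        rw [bpRes_sq_sum]
        simp only [hS]
        try rfl
      have e' : L1 j = ∑ i ∈ ((l.drop (s*j)).take s).toFinset, |h i| := by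
        simp only [hL1, hS]
      rw [e, e']
      exact hbl
    have hCsum : C = ∑ j ∈ Finset.range (l.length - 1), c (1 + j) := by
      rw [hC, Finset.sum_Ico_eq_sum_range]
    have hstep : C ≤ (Real.sqrt s)⁻¹ * ∑ j ∈ Finset.range (l.length - 1), L1 j := by
      rw [hCsum, Finset.mul_sum]
      refine Finset.sum_le_sum fun j _ => ?_
      rw [add_comm 1 j]
      exact hblock j
    have hmono : ∑ j ∈ Finset.range (l.length - 1), L1 j
        ≤ ∑ j ∈ Finset.range l.length, L1 j :=
      Finset.sum_le_sum_of_subset_of_nonneg (Finset.range_subset_range.2 (by omega))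
        (fun j _ _ => by rw [hL1]; exact Finset.sum_nonneg fun i _ => abs_nonneg _)
    have htot : ∑ j ∈ Finset.range l.length, L1 j = ∑ i ∈ T0ᶜ, |h i| := by
      have hlen : l.length ≤ s * l.length := Nat.le_mul_of_pos_left l.length hs
      have hbs := bp_sum_blocks s (fun i => |h i|) l.length l hlen
      calc ∑ j ∈ Finset.range l.length, L1 j
          = ∑ j ∈ Finset.range l.length, (((l.drop (s*j)).take s).map (fun i => |h i|)).sum := by
            refine Finset.sum_congr rfl fun j _ => ?_
            simp only [hL1, hS]
            exact List.sum_toFinset _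
              (((List.take_sublist _ _).trans (List.drop_sublist _ _)).nodup hlnd)
        _ = (l.map (fun i => |h i|)).sum := hbs
        _ = ∑ i ∈ T0ᶜ, |h i| := by
            rw [← hltoF]
            exact (List.sum_toFinset _ hlnd).symm
    have hCS : ∑ i ∈ T0, |h i| ≤ Real.sqrt s * a := by
      have h2 := Real.sum_mul_le_sqrt_mul_sqrt T0 (fun _ => (1:ℝ)) (fun i => |h i|)
      have h3 : ∑ _i ∈ T0, ((1:ℝ))^2 = (T0.card : ℝ) := by simp
      have h4 : ∑ i ∈ T0, |h i|^2 = ∑ i ∈ T0, h i ^ 2 :=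
        Finset.sum_congr rfl fun i _ => sq_abs _
      have h5 : Real.sqrt (T0.card : ℝ) ≤ Real.sqrt s :=
        Real.sqrt_le_sqrt (by exact_mod_cast hα)
      have h6 : Real.sqrt (∑ i ∈ T0, h i ^ 2) = a := by
        rw [ha, bpRes_sq_sum]
      calc ∑ i ∈ T0, |h i| = ∑ i ∈ T0, 1 * |h i| := by simp
        _ ≤ Real.sqrt (∑ _i ∈ T0, ((1:ℝ))^2) * Real.sqrt (∑ i ∈ T0, |h i|^2) := h2
        _ = Real.sqrt (T0.card : ℝ) * a := by rw [h3, h4, h6]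
        _ ≤ Real.sqrt s * a := mul_le_mul_of_nonneg_right h5 hann
    have hsqrtspos : 0 < Real.sqrt s := Real.sqrt_pos.2 (by exact_mod_cast hs)
    calc C ≤ (Real.sqrt s)⁻¹ * ∑ j ∈ Finset.range (l.length - 1), L1 j := hstep
      _ ≤ (Real.sqrt s)⁻¹ * (Real.sqrt s * a) := by
          refine mul_le_mul_of_nonneg_left ?_ (by positivity)
          exact le_trans hmono (le_trans (le_of_eq htot) (le_trans cone hCS))
      _ = a := by field_simp
  -- combine
  have hsqrt2 : Real.sqrt 2 ^ 2 = 2 := Real.sq_sqrt (by norm_num)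
  have hsqrt2pos : 0 < Real.sqrt 2 := Real.sqrt_pos.2 (by norm_num)
  have hA0 : A = 0 := by
    have key : (1 - δ) * A ≤ δ * Real.sqrt 2 * A := by
      refine le_trans hRIPlow (le_trans hupper ?_)
      have h1 : (a + b) * C ≤ (a + b) * a :=
        mul_le_mul_of_nonneg_left htail (by positivity)
      have h2 : ((a + b) * a) ^ 2 ≤ 2 * A ^ 2 := by
        nlinarith [sq_nonneg (a - b), sq_nonneg a, sq_nonneg b, hAab, sq_nonneg (a*b - b^2),
          mul_nonneg hann hbnn]
      have h3 : (a + b) * a ≤ Real.sqrt 2 * A := by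
        have hnn : 0 ≤ (a + b) * a := by positivity
        calc (a + b) * a = Real.sqrt (((a + b) * a) ^ 2) := (Real.sqrt_sq hnn).symm
          _ ≤ Real.sqrt (2 * A ^ 2) := Real.sqrt_le_sqrt h2
          _ = Real.sqrt 2 * A := by
              rw [Real.sqrt_mul (by norm_num), Real.sqrt_sq hAnn]
      calc δ * ((a + b) * C) ≤ δ * ((a + b) * a) :=
            mul_le_mul_of_nonneg_left h1 hδ0.le
        _ ≤ δ * (Real.sqrt 2 * A) := mul_le_mul_of_nonneg_left h3 hδ0.le
        _ = δ * Real.sqrt 2 * A := by ring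
    have hcoef : δ * Real.sqrt 2 < 1 - δ := by
      have hmul := mul_lt_mul_of_pos_right hδ hsqrt2pos
      nlinarith [hsqrt2]
    by_contra hAne
    have hApos : 0 < A := lt_of_le_of_ne hAnn (Ne.symm hAne)
    have hk2 := mul_lt_mul_of_pos_right hcoef hApos
    linarith only [hk2, key]
  have hhT0 : ∀ i ∈ T0, h i = 0 := by
    have ha0 : ∑ i ∈ T0, h i ^ 2 = 0 := by
      have haz : a ^ 2 = 0 := by
        have s1 := sq_nonneg a
        have s2 := sq_nonneg b
        linarith only [hAab, hA0, s1, s2]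
      rw [← bpRes_sq_sum h T0, ← ha2, haz]
    intro i hi
    have := (Finset.sum_eq_zero_iff_of_nonneg (fun i _ => sq_nonneg (h i))).1 ha0 i hi
    exact pow_eq_zero_iff (n := 2) (by norm_num) |>.1 this
  have hl1T0 : ∑ i ∈ T0, |h i| = 0 :=
    Finset.sum_eq_zero fun i hi => by rw [hhT0 i hi, abs_zero]
  have hl1T0c : ∑ i ∈ T0ᶜ, |h i| = 0 := by
    refine le_antisymm ?_ (Finset.sum_nonneg fun i _ => abs_nonneg _)
    rw [← hl1T0]
    exact cone
  intro i
  by_cases hi : i ∈ T0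
  · exact hhT0 i hi
  · have hmem : i ∈ T0ᶜ := Finset.mem_compl.2 hi
    have := (Finset.sum_eq_zero_iff_of_nonneg (fun i _ => abs_nonneg (h i))).1 hl1T0c i hmem
    exact abs_eq_zero.1 this
end

section
/- Let v[k] ∈ [0,1]^N satisfy the discrete-time NIMFA equations v_i[k+1] = (1−δ_T)v_i[k] + β_T(1−v_i[k])Σⱼ a_{ij} v_j[k] with β_T ≥ 0, δ_T ∈ [0,1], and a_{ij} ≥ 0. If additionally δ_T + β_T d_i ≤ 1 for all i with d_i = Σⱼ a_{ij}, then v_i[k+1] ∈ [0,1] for all i whenever v_j[k] ∈ [0,1] for all j; i.e., the unit cube [0,1]^N is positively invariant. -/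
open Finset

theorem nimfa_unit_cube_invariant
    (N : ℕ) (a : Fin N → Fin N → ℝ) (ha : ∀ i j, 0 ≤ a i j)
    (βT δT : ℝ) (hβ : 0 ≤ βT) (hδ0 : 0 ≤ δT) (hδ1 : δT ≤ 1)
    (hT : ∀ i, δT + βT * ∑ j, a i j ≤ 1)
    (v : ℕ → Fin N → ℝ)
    (hv : ∀ k i, v (k + 1) i = (1 - δT) * v k i
      + βT * (1 - v k i) * ∑ j, a i j * v k j) :
    ∀ k, (∀ j, v k j ∈ Set.Icc (0 : ℝ) 1) →
      ∀ i, v (k + 1) i ∈ Set.Icc (0 : ℝ) 1 := by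
  intro k hk i
  obtain ⟨hv0, hv1⟩ : v k i ∈ Set.Icc (0:ℝ) 1 := hk i
  have hS0 : 0 ≤ ∑ j, a i j * v k j :=
    Finset.sum_nonneg fun j _ => mul_nonneg (ha i j) (hk j).1
  have hS1 : ∑ j, a i j * v k j ≤ ∑ j, a i j :=
    Finset.sum_le_sum fun j _ => by
      nlinarith [(hk j).1, (hk j).2, ha i j]
  have hTi := hT i
  rw [hv]
  constructor
  · exact add_nonneg (mul_nonneg (by linarith) hv0)
      (mul_nonneg (mul_nonneg hβ (by linarith)) hS0)
  · nlinarith [mul_le_mul_of_nonneg_left hS1 hβ,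
      mul_le_mul_of_nonneg_right (mul_le_mul_of_nonneg_left hS1 hβ) (sub_nonneg.2 hv1)]
end

section
/- If the n×N viral state matrix V satisfies rank(V) < (N−1)/2, then the matrix M = (I_N ⊗ V, C_vec)·blockdiag(Π_N, 1) of size nN × (L_max+1), with L_max = N(N−1)/2, does not have full column rank; consequently the linear system B_vec = M(wᵀ, δ_T)ᵀ does not have a unique solution for (w, δ_T). -/
open Matrix Kronecker

open Module Submodule in
lemma finrank_iSup_finset_le_aux {E : Type*} [AddCommGroup E] [Module ℝ E]
    [FiniteDimensional ℝ E] {ι : Type*} [DecidableEq ι] (s : Finset ι)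
    (W : ι → Submodule ℝ E) :
    finrank ℝ ↥(⨆ i ∈ s, W i) ≤ ∑ i ∈ s, finrank ℝ ↥(W i) := by
  induction s using Finset.induction with
  | empty => simp
  | insert a s h ih =>
    rw [Finset.sum_insert h, Finset.iSup_insert]
    exact le_trans (Submodule.finrank_add_le_finrank_add_finrank _ _)
      (add_le_add le_rfl ih)

open Module Submodule in
lemma finrank_iSup_fintype_le_aux {E : Type*} [AddCommGroup E] [Module ℝ E]
    [FiniteDimensional ℝ E] {ι : Type*} [Fintype ι] [DecidableEq ι]
    (W : ι → Submodule ℝ E) :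
    finrank ℝ ↥(⨆ i, W i) ≤ ∑ i, finrank ℝ ↥(W i) := by
  have h : (⨆ i, W i) = ⨆ i ∈ Finset.univ, W i := by
    simp [Finset.mem_univ]
  rw [h]
  exact finrank_iSup_finset_le_aux _ W

/-- The linear map embedding a vector into the `i`-th block of a
vector indexed by `Fin N × Fin n`. -/
def singLM (n N : ℕ) (i : Fin N) : (Fin n → ℝ) →ₗ[ℝ] (Fin N × Fin n → ℝ) where
  toFun y p := if p.1 = i then y p.2 else 0
  map_add' y z := by funext p; by_cases h : p.1 = i <;> simp [h]
  map_smul' c y := by funext p; by_cases h : p.1 = i <;> simp [h]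

@[simp] lemma singLM_apply (n N : ℕ) (i : Fin N) (y : Fin n → ℝ)
    (p : Fin N × Fin n) : singLM n N i y p = if p.1 = i then y p.2 else 0 := rfl

theorem nimfa_no_unique_solution_of_low_rank
    (n N : ℕ)
    (V C : Matrix (Fin n) (Fin N) ℝ)
    (Pm : Matrix (Fin N × Fin N) (Fin (N * (N - 1) / 2)) ℝ)
    (Cvec : Fin N × Fin n → ℝ) (hCvec : ∀ i k, Cvec (i, k) = C k i)
    (M : Matrix (Fin N × Fin n) (Fin (N * (N - 1) / 2) ⊕ Unit) ℝ)
    (hM : M = Matrix.fromCols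
      (((1 : Matrix (Fin N) (Fin N) ℝ) ⊗ₖ V) * Pm)
      (Matrix.replicateCol Unit Cvec))
    (hrank : (V.rank : ℝ) < ((N : ℝ) - 1) / 2) :
    M.rank < N * (N - 1) / 2 + 1 ∧
      ∃ w₁ w₂ : Fin (N * (N - 1) / 2) ⊕ Unit → ℝ,
        w₁ ≠ w₂ ∧ M.mulVec w₁ = M.mulVec w₂ := by
  classical
  set r := V.rank with hr
  -- numeric fact : 2r + 2 ≤ N
  have hNr : 2 * r + 2 ≤ N := by
    rw [lt_div_iff₀ (by norm_num : (0:ℝ) < 2)] at hrank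
    have h1 : ((2 * r + 1 : ℕ) : ℝ) < (N : ℝ) := by push_cast; linarith
    exact_mod_cast h1
  set W : Fin N → Submodule ℝ (Fin N × Fin n → ℝ) :=
    fun i => Submodule.map (singLM n N i) (LinearMap.range V.mulVecLin) with hW
  set S : Submodule ℝ (Fin N × Fin n → ℝ) :=
    (⨆ i, W i) ⊔ Submodule.span ℝ {Cvec} with hS
  -- every column of M lies in S
  have hcols : Set.range Mᵀ ⊆ (S : Set (Fin N × Fin n → ℝ)) := by
    rintro x ⟨c, rfl⟩
    cases c with
    | inl j =>
      have hcol : Mᵀ (Sum.inl j)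
          = ∑ i : Fin N, (singLM n N i) (V.mulVec (fun l => Pm (i, l) j)) := by
        funext p
        obtain ⟨a, k⟩ := p
        have h0 : Mᵀ (Sum.inl j) (a, k)
            = ∑ q : Fin N × Fin N,
              ((1 : Matrix (Fin N) (Fin N) ℝ) a q.1 * V k q.2) * Pm q j := by
          simp [hM, Matrix.transpose_apply, Matrix.fromCols,
            Matrix.mul_apply, Matrix.kroneckerMap_apply]
        rw [h0]
        simp only [Fintype.sum_prod_type, Matrix.one_apply, ite_mul, one_mul,
          zero_mul, Finset.sum_ite_eq, Finset.mem_univ, if_true]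
        simp [Finset.sum_apply, Matrix.mulVec, dotProduct,
          Finset.sum_ite_eq', Finset.sum_ite_eq]
      rw [hcol]
      refine Submodule.sum_mem _ fun i _ => ?_
      exact Submodule.mem_sup_left (Submodule.mem_iSup_of_mem i ⟨_, ⟨_, rfl⟩, rfl⟩)
    | inr u =>
      have : Mᵀ (Sum.inr u) = Cvec := by
        funext p; simp [hM, Matrix.fromCols, Matrix.replicateCol]
      rw [this]
      exact Submodule.mem_sup_right (Submodule.subset_span rfl)
  -- rank bound
  have hrk : M.rank ≤ N * r + 1 := by
    rw [Matrix.rank_eq_finrank_span_cols]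
    have h1 : Submodule.span ℝ (Set.range Mᵀ) ≤ S := Submodule.span_le.mpr hcols
    refine le_trans (Submodule.finrank_mono h1) ?_
    refine le_trans (Submodule.finrank_add_le_finrank_add_finrank _ _) ?_
    have h2 : Module.finrank ℝ ↥(⨆ i, W i) ≤ N * r := by
      refine le_trans (finrank_iSup_fintype_le_aux W) ?_
      have hWi : ∀ i, Module.finrank ℝ ↥(W i) ≤ r :=
        fun i => le_trans (Submodule.finrank_map_le _ _) le_rfl
      calc ∑ i : Fin N, Module.finrank ℝ ↥(W i) ≤ ∑ _i : Fin N, r :=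
            Finset.sum_le_sum fun i _ => hWi i
        _ = N * r := by simp [Finset.sum_const, mul_comm]
    have h3 : Module.finrank ℝ ↥(Submodule.span ℝ ({Cvec} : Set (Fin N × Fin n → ℝ))) ≤ 1 := by
      refine le_trans (finrank_span_le_card _) ?_
      simp
    omega
  have hmain : M.rank < N * (N - 1) / 2 + 1 := by
    refine lt_of_le_of_lt hrk ?_
    obtain ⟨m, rfl⟩ : ∃ m, N = m + 2 := ⟨N - 2, by omega⟩
    have h2r : 2 * r ≤ m := by omega
    simp only [show m + 2 - 1 = m + 1 from rfl]
    have he : Even ((m + 2) * (m + 1)) := by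
      rw [mul_comm]; exact Nat.even_mul_succ_self (m + 1)
    have hq : 2 * ((m + 2) * (m + 1) / 2) = (m + 2) * (m + 1) := by
      rw [mul_comm 2]; exact Nat.div_mul_cancel he.two_dvd
    have key : 2 * ((m + 2) * r) < 2 * ((m + 2) * (m + 1) / 2) := by
      rw [hq]; nlinarith
    exact Nat.succ_lt_succ (Nat.lt_of_mul_lt_mul_left key)
  refine ⟨hmain, ?_⟩
  -- non-injectivity
  have hcard : Module.finrank ℝ (Fin (N * (N - 1) / 2) ⊕ Unit → ℝ)
      = N * (N - 1) / 2 + 1 := by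
    rw [Module.finrank_pi]; simp
  have hMr : M.rank = Module.finrank ℝ ↥(LinearMap.range M.mulVecLin) := rfl
  have hker : LinearMap.ker M.mulVecLin ≠ ⊥ := by
    intro hbot
    have hrn := LinearMap.finrank_range_add_finrank_ker M.mulVecLin
    rw [hbot, finrank_bot, hcard] at hrn
    omega
  obtain ⟨v, hv, hv0⟩ := Submodule.exists_mem_ne_zero_of_ne_bot hker
  refine ⟨v, 0, hv0, ?_⟩
  rw [LinearMap.mem_ker, Matrix.mulVecLin_apply] at hv
  rw [hv, Matrix.mulVec_zero]
end
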